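/- Consider an MLST instance with source s ∈ T_ℓ and the associated flow-based ILP. In every feasible ILP solution (x, y, f) that minimizes the objective Σ_{uv∈E} c(uv)·(y_{uv} + y_{vu}), for every 1 ≤ i ≤ ℓ the undirected edge set E_i = {uv ∈ E : y_{uv} ≥ i or y_{vu} ≥ i} forms a connected acyclic subgraph of G containing all vertices of T_i; in particular E_i is a Steiner tree for T_i, and E_ℓ ⊆ E_{ℓ−1} ⊆ … ⊆ E_1. -/

import Mathlib

/-- The vertices covered by a set of edges. -/
def edgeSupport {V : Type*} (S : Set (Sym2 V)) : Set V :=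
  {v | ∃ e ∈ S, v ∈ e}

/-- The edges of `S` form a connected subgraph containing all vertices of `T`:
all vertices of `T` together with all endpoints of edges of `S` are mutually
reachable using only edges of `S`. -/
def SpansConn {V : Type*} (S : Set (Sym2 V)) (T : Set V) : Prop :=
  ∀ u ∈ T ∪ edgeSupport S, ∀ v ∈ T ∪ edgeSupport S,
    (SimpleGraph.fromEdgeSet S).Reachable u v

/-- `L(v)`: the largest level `i ∈ {1, …, ℓ}` with `v ∈ T i` (`0` if none). -/
def Lvl {V : Type*} [DecidableEq V] (ℓ : ℕ) (T : ℕ → Finset V) (v : V) : ℕ :=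
  ((Finset.Icc 1 ℓ).filter (fun i => v ∈ T i)).sup id

/-- Feasibility of a solution `(x, y, f)` of the flow-based ILP for the MLST problem:
variables live on arcs (ordered adjacent pairs) of `G`; flow conservation routes
`|T₁| − 1` units from the source `s` to the bottom-level terminals; capacity,
in-degree, linking, propagation and terminal-level constraints as in the paper. -/
def ILPFeasible {V : Type*} [Fintype V] [DecidableEq V] (G : SimpleGraph V)
    (ℓ : ℕ) (T : ℕ → Finset V) (s : V)
    (x y : V → V → ℕ) (f : V → V → ℝ) : Prop :=
  (∀ u v : V, ¬ G.Adj u v → x u v = 0) ∧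
  (∀ u v : V, ¬ G.Adj u v → y u v = 0) ∧
  (∀ u v : V, ¬ G.Adj u v → f u v = 0) ∧
  (∀ u v : V, x u v ≤ 1) ∧
  (∀ u v : V, x u v ≤ y u v ∧ y u v ≤ ℓ * x u v) ∧
  (∀ u v : V, 0 ≤ f u v ∧ f u v ≤ (((T 1).card : ℝ) - 1) * (x u v : ℝ)) ∧
  (∀ v : V, (∑ w : V, f v w) - (∑ u : V, f u v) =
      if v = s then ((T 1).card : ℝ) - 1 else if v ∈ T 1 then -1 else 0) ∧
  (∀ v : V, ∑ u : V, x u v ≤ 1) ∧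
  (∀ v w : V, G.Adj v w → v ≠ s → x v w ≤ ∑ u ∈ Finset.univ.erase w, x u v) ∧
  (∀ v w : V, G.Adj v w → v ≠ s → y v w ≤ ∑ u ∈ Finset.univ.erase w, y u v) ∧
  (∀ v ∈ T 1, v ≠ s → Lvl ℓ T v ≤ ∑ u : V, y u v)

/-- The ILP objective `Σ_{uv ∈ E} c(uv)·(y_{uv} + y_{vu})`, written as a sum over
ordered pairs (the cost function `c` is symmetric and `y` vanishes off arcs). -/
def ILPobj {V : Type*} [Fintype V] (c : V → V → ℝ) (y : V → V → ℕ) : ℝ :=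
  ∑ u : V, ∑ v : V, c u v * (y u v : ℝ)

/-- The undirected edge set on level `i` extracted from the ILP variables `y`:
edges `uv` of `G` with `y u v ≥ i` or `y v u ≥ i`. -/
def EdgeLvl {V : Type*} (G : SimpleGraph V) (y : V → V → ℕ) (i : ℕ) : Set (Sym2 V) :=
  {e | e ∈ G.edgeSet ∧ ∃ u v : V, e = s(u, v) ∧ i ≤ y u v}

namespace MLSTProof

open Finset

set_option linter.unusedSectionVars false

variable {V : Type} [Fintype V] [DecidableEq V] {G : SimpleGraph V} {ℓ : ℕ} {T : ℕ → Finset V}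
  {s : V} {x y : V → V → ℕ} {f : V → V → ℝ}




section Basics

variable (hfeas : ILPFeasible G ℓ T s x y f)
include hfeas

lemma adj_of_x {u v : V} (h : x u v = 1) : G.Adj u v := by
  by_contra hn
  have := hfeas.1 u v hn
  omega

lemma x_le_one (u v : V) : x u v ≤ 1 := hfeas.2.2.2.1 u v

lemma x_of_y {u v : V} (h : 1 ≤ y u v) : x u v = 1 := by
  have h2 := (hfeas.2.2.2.2.1 u v).2
  have h1 := hfeas.2.2.2.1 u v
  by_contra hn
  have hz : x u v = 0 := by omega
  rw [hz, Nat.mul_zero] at h2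
  omega

lemma y_of_x {u v : V} (h : x u v = 1) : 1 ≤ y u v := by
  have := (hfeas.2.2.2.2.1 u v).1; omega

lemma f_nonneg (u v : V) : 0 ≤ f u v := (hfeas.2.2.2.2.2.1 u v).1

lemma f_zero_of_x {u v : V} (h : x u v ≠ 1) : f u v = 0 := by
  have h0 : x u v = 0 := by have := x_le_one hfeas u v; omega
  have h2 := (hfeas.2.2.2.2.2.1 u v).2
  rw [h0] at h2
  norm_num at h2
  exact le_antisymm h2 (f_nonneg hfeas u v)

lemma x_of_f {u v : V} (h : 0 < f u v) : x u v = 1 := by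
  by_contra hn; rw [f_zero_of_x hfeas hn] at h; exact lt_irrefl _ h

lemma parent_unique {u u' v : V} (h : x u v = 1) (h' : x u' v = 1) : u = u' := by
  by_contra hne
  have hsum := hfeas.2.2.2.2.2.2.2.1 v
  have h2 : 2 ≤ ∑ u'' : V, x u'' v := by
    calc 2 = ∑ u'' ∈ ({u, u'} : Finset V), x u'' v := by
            rw [Finset.sum_pair hne, h, h']
    _ ≤ _ := Finset.sum_le_sum_of_subset (Finset.subset_univ _)
  omega

lemma y_zero_of_not_parent {u v p : V} (hp : x p v = 1) (hne : u ≠ p) : y u v = 0 := by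
  by_contra hn
  have h1 : 1 ≤ y u v := by omega
  exact hne (parent_unique hfeas (x_of_y hfeas h1) hp)

lemma sum_f_in {v p : V} (hp : x p v = 1) : (∑ u : V, f u v) = f p v := by
  apply Finset.sum_eq_single_of_mem p (Finset.mem_univ p)
  intro b _ hb
  exact f_zero_of_x hfeas (fun h => hb (parent_unique hfeas h hp))

lemma sum_y_in {v p : V} (hp : x p v = 1) : (∑ u : V, y u v) = y p v := by
  apply Finset.sum_eq_single_of_mem p (Finset.mem_univ p)
  intro b _ hb
  exact y_zero_of_not_parent hfeas hp hb

lemma cons_le_zero {v : V} (hv : v ≠ s) : (∑ w : V, f v w) ≤ ∑ u : V, f u v := by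
  have h := hfeas.2.2.2.2.2.2.1 v
  rw [if_neg hv] at h
  split_ifs at h with h2 <;> linarith

/-- Flow balance over a set `W` not containing `s` all of whose members have a
parent inside `W`: `W` contains no terminals and no flow leaves `W`. -/
lemma balance (W : Finset V) (hsW : s ∉ W)
    (hin : ∀ v ∈ W, ∃ u ∈ W, x u v = 1) :
    (∀ v ∈ W, v ∉ T 1) ∧ (∀ v ∈ W, ∀ w, w ∉ W → f v w = 0) := by
  have hxin : ∀ v ∈ W, ∀ u, x u v = 1 → u ∈ W := by
    intro v hv u hu
    obtain ⟨u', hu', hx'⟩ := hin v hv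
    rwa [parent_unique hfeas hu hx']
  have hzin : ∀ v ∈ W, ∀ u ∈ Wᶜ, f u v = 0 := by
    intro v hv u hu
    exact f_zero_of_x hfeas (fun h => (Finset.mem_compl.mp hu) (hxin v hv u h))
  have hsplit : ∀ (g : V → ℝ), (∑ w : V, g w) = ∑ w ∈ W, g w + ∑ w ∈ Wᶜ, g w :=
    fun g => (Finset.sum_add_sum_compl W g).symm
  have hkey : ∑ v ∈ W, ((∑ w : V, f v w) - (∑ u : V, f u v))
      = ∑ v ∈ W, ∑ w ∈ Wᶜ, f v w := by
    rw [Finset.sum_sub_distrib]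
    have h1 : ∑ v ∈ W, (∑ w : V, f v w)
        = ∑ v ∈ W, ∑ w ∈ W, f v w + ∑ v ∈ W, ∑ w ∈ Wᶜ, f v w := by
      rw [← Finset.sum_add_distrib]
      exact Finset.sum_congr rfl fun v _ => hsplit _
    have h2 : ∑ v ∈ W, (∑ u : V, f u v)
        = ∑ v ∈ W, ∑ u ∈ W, f u v + ∑ v ∈ W, ∑ u ∈ Wᶜ, f u v := by
      rw [← Finset.sum_add_distrib]
      exact Finset.sum_congr rfl fun v _ => hsplit _
    have h3 : ∑ v ∈ W, ∑ u ∈ W, f u v = ∑ v ∈ W, ∑ w ∈ W, f v w := Finset.sum_comm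
    have h4 : ∑ v ∈ W, ∑ u ∈ Wᶜ, f u v = 0 :=
      Finset.sum_eq_zero fun v hv => Finset.sum_eq_zero fun u hu => hzin v hv u hu
    rw [h1, h2, h3, h4]
    ring
  have hval : ∑ v ∈ W, ((∑ w : V, f v w) - (∑ u : V, f u v))
      = ∑ v ∈ W, (if v ∈ T 1 then (-1 : ℝ) else 0) := by
    apply Finset.sum_congr rfl
    intro v hv
    rw [hfeas.2.2.2.2.2.2.1 v, if_neg (fun h : v = s => hsW (h ▸ hv))]
  have hnonneg : (0:ℝ) ≤ ∑ v ∈ W, ∑ w ∈ Wᶜ, f v w :=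
    Finset.sum_nonneg fun v _ => Finset.sum_nonneg fun w _ => f_nonneg hfeas v w
  have hnonpos : ∑ v ∈ W, (if v ∈ T 1 then (-1 : ℝ) else 0) ≤ 0 :=
    Finset.sum_nonpos fun v _ => by split_ifs <;> norm_num
  have hzero : ∑ v ∈ W, (if v ∈ T 1 then (-1 : ℝ) else 0) = 0 := by
    rw [← hval, hkey]; linarith [hval ▸ hkey ▸ hnonneg]
  constructor
  · intro v hv hvT
    have := (Finset.sum_eq_zero_iff_of_nonpos
      (fun v _ => by split_ifs <;> norm_num : ∀ v ∈ W, (if v ∈ T 1 then (-1:ℝ) else 0) ≤ 0)).mp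
      hzero v hv
    rw [if_pos hvT] at this
    norm_num at this
  · intro v hv w hw
    have hz : ∑ v ∈ W, ∑ w ∈ Wᶜ, f v w = 0 := by
      rw [← hkey, hval, hzero]
    have h1 := (Finset.sum_eq_zero_iff_of_nonneg
      (fun v _ => Finset.sum_nonneg fun w _ => f_nonneg hfeas v w)).mp hz v hv
    exact (Finset.sum_eq_zero_iff_of_nonneg
      (fun w _ => f_nonneg hfeas v w)).mp h1 w (Finset.mem_compl.mpr hw)

end Basics






lemma ILPobj_lt_of (c : V → V → ℝ) (y y' : V → V → ℕ)
    (hle : ∀ u v : V, c u v * (y' u v : ℝ) ≤ c u v * (y u v : ℝ)) (p q : V)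
    (hstrict : c p q * (y' p q : ℝ) < c p q * (y p q : ℝ)) :
    ILPobj c y' < ILPobj c y := by
  unfold ILPobj
  exact Finset.sum_lt_sum (fun u _ => Finset.sum_le_sum fun v _ => hle u v)
    ⟨p, Finset.mem_univ p,
      Finset.sum_lt_sum (fun v _ => hle p v) ⟨q, Finset.mem_univ q, hstrict⟩⟩

/-- Deleting an arc `(p, s)` into the source, carrying no flow, keeps feasibility. -/
lemma delete_arc_into_s (hfeas : ILPFeasible G ℓ T s x y f) (p : V)
    (hx : x p s = 1) (hf : f p s = 0) :
    ILPFeasible G ℓ T s (fun u v => if u = p ∧ v = s then 0 else x u v)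
      (fun u v => if u = p ∧ v = s then 0 else y u v) f := by
  obtain ⟨h1, h2, h3, h4, h5, h6, h7, h8, h9, h10, h11⟩ := hfeas
  refine ⟨?_, ?_, h3, ?_, ?_, ?_, h7, ?_, ?_, ?_, ?_⟩ <;> beta_reduce
  · intro u v h; split_ifs with hc; · rfl
    exact h1 u v h
  · intro u v h; split_ifs with hc; · rfl
    exact h2 u v h
  · intro u v; split_ifs with hc
    · exact Nat.zero_le 1
    · exact h4 u v
  · intro u v; split_ifs with hc
    · simp
    · exact h5 u v
  · intro u v
    refine ⟨(h6 u v).1, ?_⟩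
    split_ifs with hc
    · obtain ⟨rfl, rfl⟩ := hc
      rw [hf]
      norm_num
    · exact (h6 u v).2
  · intro v
    calc ∑ u : V, (if u = p ∧ v = s then 0 else x u v) ≤ ∑ u : V, x u v := by
          apply Finset.sum_le_sum; intro u _; split_ifs <;> omega
    _ ≤ 1 := h8 v
  · intro v w hadj hvs
    split_ifs with hc
    · exact Nat.zero_le _
    · calc x v w ≤ ∑ u ∈ Finset.univ.erase w, x u v := h9 v w hadj hvs
        _ = ∑ u ∈ Finset.univ.erase w, (if u = p ∧ v = s then 0 else x u v) := by
            apply Finset.sum_congr rfl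
            intro u _
            rw [if_neg (fun h => hvs h.2)]
  · intro v w hadj hvs
    split_ifs with hc
    · exact Nat.zero_le _
    · calc y v w ≤ ∑ u ∈ Finset.univ.erase w, y u v := h10 v w hadj hvs
        _ = ∑ u ∈ Finset.univ.erase w, (if u = p ∧ v = s then 0 else y u v) := by
            apply Finset.sum_congr rfl
            intro u _
            rw [if_neg (fun h => hvs h.2)]
  · intro v hv hvs
    calc Lvl ℓ T v ≤ ∑ u : V, y u v := h11 v hv hvs
      _ = ∑ u : V, (if u = p ∧ v = s then 0 else y u v) := by
          apply Finset.sum_congr rfl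
          intro u _
          rw [if_neg (fun h => hvs h.2)]

/-- In an optimal solution combined with an arc into `s` with zero flow we get a
strict improvement: contradiction. -/
lemma improve_of_arc_into_s (hfeas : ILPFeasible G ℓ T s x y f)
    (c : V → V → ℝ) (hcpos : ∀ u v : V, G.Adj u v → 0 < c u v)
    (p : V) (hx : x p s = 1) (hf : f p s = 0) :
    ∃ (x' y' : V → V → ℕ) (f' : V → V → ℝ),
      ILPFeasible G ℓ T s x' y' f' ∧ ILPobj c y' < ILPobj c y := by
  refine ⟨_, _, f, delete_arc_into_s hfeas p hx hf, ?_⟩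
  have hcps : 0 < c p s := hcpos p s (adj_of_x hfeas hx)
  have hyps : 1 ≤ y p s := y_of_x hfeas hx
  apply ILPobj_lt_of c y _ ?_ p s
  · norm_num
    exact mul_pos hcps (by exact_mod_cast hyps : (0:ℝ) < (y p s : ℝ))
  · intro u v
    split_ifs with hc
    · norm_num [hc.1, hc.2]
      exact mul_nonneg (hcpos p s (adj_of_x hfeas hx)).le (Nat.cast_nonneg _)
    · exact le_refl _

/-- Given a feasible solution with an arc `(p, s)` into the source, the flow can be
rerouted so that this arc carries no flow. -/
lemma flow_fix (hfeas : ILPFeasible G ℓ T s x y f) (p : V) (hx : x p s = 1) :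
    ∃ f' : V → V → ℝ, ILPFeasible G ℓ T s x y f' ∧ f' p s = 0 := by
  classical
  by_cases hf : f p s = 0
  · exact ⟨f, hfeas, hf⟩
  have hfpos : 0 < f p s := lt_of_le_of_ne (f_nonneg hfeas p s) (Ne.symm hf)
  -- the parent function
  set Pa : V → V := fun v => if h : ∃ u, x u v = 1 then h.choose else v with hPa
  have hPaSpec : ∀ v u : V, x u v = 1 → Pa v = u := by
    intro v u hu
    have hex : ∃ u, x u v = 1 := ⟨u, hu⟩
    have h1 : x (Pa v) v = 1 := by
      simp only [hPa, dif_pos hex]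
      exact hex.choose_spec
    exact parent_unique hfeas h1 hu
  set g : ℕ → V := fun n => Pa^[n] s with hg
  have hg0 : g 0 = s := rfl
  have hgsucc : ∀ n, g (n+1) = Pa (g n) := fun n => Function.iterate_succ_apply' Pa n s
  have hp1 : g 1 = p := by rw [hgsucc 0, hg0]; exact hPaSpec s p hx
  -- the invariant: walking backwards along parents, flow stays positive
  have hInv : ∀ j : ℕ, (∀ i, 1 ≤ i → i ≤ j → g i ≠ s) →
      x (g (j+1)) (g j) = 1 ∧ 0 < f (g (j+1)) (g j) := by
    intro j
    induction j with
    | zero =>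
      intro _
      rw [hp1, hg0]
      exact ⟨hx, hfpos⟩
    | succ j ih =>
      intro hno
      have hprev := ih (fun i h1 h2 => hno i h1 (h2.trans (Nat.le_succ j)))
      have hvs : g (j+1) ≠ s := hno (j+1) (by omega) (le_refl _)
      have hout : 0 < ∑ w : V, f (g (j+1)) w :=
        lt_of_lt_of_le hprev.2
          (Finset.single_le_sum (fun w _ => f_nonneg hfeas (g (j+1)) w) (Finset.mem_univ (g j)))
      have hin : 0 < ∑ u : V, f u (g (j+1)) := lt_of_lt_of_le hout (cons_le_zero hfeas hvs)
      have hexu : ∃ u, 0 < f u (g (j+1)) := by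
        by_contra hn
        push_neg at hn
        have : ∑ u : V, f u (g (j+1)) ≤ 0 := Finset.sum_nonpos fun u _ => hn u
        linarith
      obtain ⟨u, hu⟩ := hexu
      have hxu : x u (g (j+1)) = 1 := x_of_f hfeas hu
      have hgu : g (j+1+1) = u := by rw [hgsucc (j+1)]; exact hPaSpec (g (j+1)) u hxu
      rw [hgu]
      exact ⟨hxu, hu⟩
  -- pigeonhole: the sequence repeats
  have hPex : ∃ m : ℕ, ∃ a' < m, g a' = g m := by
    obtain ⟨a, b, hne, heq⟩ := Fintype.exists_ne_map_eq_of_card_lt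
      (fun i : Fin (Fintype.card V + 1) => g i)
      (by simpa using Nat.lt_succ_self (Fintype.card V))
    rcases lt_or_gt_of_ne hne with h | h
    · exact ⟨b, ⟨a, h, heq⟩⟩
    · exact ⟨a, ⟨b, h, heq.symm⟩⟩
  set b0 := Nat.find hPex with hb0def
  obtain ⟨a1, ha1, heq1⟩ := Nat.find_spec hPex
  have hinj : ∀ i j : ℕ, i < j → j < b0 → g i ≠ g j := by
    intro i j hij hj hgij
    exact Nat.find_min hPex hj ⟨i, hij, hgij⟩
  have hb0pos : 1 ≤ b0 := by omega
  have hnos : ∀ i, 1 ≤ i → i < b0 → g i ≠ s := by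
    intro i h1 h2 hgi
    exact hinj 0 i h1 h2 (by rw [hg0, hgi])
  have hInv' : ∀ j, j < b0 → x (g (j+1)) (g j) = 1 ∧ 0 < f (g (j+1)) (g j) := by
    intro j hj
    exact hInv j (fun i h1 h2 => hnos i h1 (lt_of_le_of_lt h2 hj))
  by_cases ha10 : a1 = 0
  · -- the parent chain returns to s : a directed cycle through s; reroute
    have hgb0 : g b0 = s := by rw [← heq1, ha10, hg0]
    set δ := f (g 1) (g 0) with hδdef
    have hδ0 : 0 ≤ δ := f_nonneg hfeas _ _
    -- flow along the cycle is at least δ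
    have hmono : ∀ j, j < b0 → δ ≤ f (g (j+1)) (g j) := by
      intro j
      induction j with
      | zero => intro _; exact le_refl _
      | succ j ih =>
        intro hj
        have hj' : j < b0 := by omega
        have h1 := ih hj'
        have hvs : g (j+1) ≠ s := hnos (j+1) (by omega) hj
        have hxparent := (hInv' (j+1) hj).1
        have hsum : (∑ u : V, f u (g (j+1))) = f (g (j+1+1)) (g (j+1)) :=
          sum_f_in hfeas hxparent
        have hout : f (g (j+1)) (g j) ≤ ∑ w : V, f (g (j+1)) w :=
          Finset.single_le_sum (fun w _ => f_nonneg hfeas (g (j+1)) w) (Finset.mem_univ (g j))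
        have hcons := cons_le_zero hfeas hvs
        rw [hsum] at hcons
        linarith
    -- the correction term
    set C : V → V → ℝ :=
      fun u v => ∑ j ∈ Finset.range b0, (if u = g (j+1) ∧ v = g j then δ else 0) with hCdef
    have hCcase : ∀ u v : V, ((∃ j0, j0 < b0 ∧ u = g (j0+1) ∧ v = g j0) → C u v = δ) ∧
        ((¬ ∃ j0, j0 < b0 ∧ u = g (j0+1) ∧ v = g j0) → C u v = 0) := by
      intro u v
      constructor
      · rintro ⟨j0, hj0, hu, hv⟩
        have hCval : (∑ j ∈ Finset.range b0, (if u = g (j+1) ∧ v = g j then δ else 0))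
            = (if u = g (j0+1) ∧ v = g j0 then δ else 0) := by
          apply Finset.sum_eq_single_of_mem j0 (Finset.mem_range.mpr hj0)
          intro j hjmem hne
          rw [if_neg]
          rintro ⟨hu', hv'⟩
          have hj : j < b0 := Finset.mem_range.mp hjmem
          have hgg : g j = g j0 := by rw [← hv', hv]
          rcases lt_or_gt_of_ne hne with h | h
          · exact hinj j j0 h hj0 hgg
          · exact hinj j0 j h hj hgg.symm
        simp only [hCdef]
        rw [hCval, if_pos ⟨hu, hv⟩]
      · intro hnex
        simp only [hCdef]
        apply Finset.sum_eq_zero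
        intro j hjmem
        rw [if_neg]
        rintro ⟨hu', hv'⟩
        exact hnex ⟨j, Finset.mem_range.mp hjmem, hu', hv'⟩
    have hC_nonneg : ∀ u v : V, 0 ≤ C u v := by
      intro u v
      apply Finset.sum_nonneg
      intro j _
      split_ifs <;> simp [hδ0]
    have hC_le : ∀ u v : V, C u v ≤ f u v := by
      intro u v
      by_cases hex : ∃ j0, j0 < b0 ∧ u = g (j0+1) ∧ v = g j0
      · obtain ⟨j0, hj0, hu, hv⟩ := hex
        rw [(hCcase u v).1 ⟨j0, hj0, hu, hv⟩, hu, hv]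
        exact hmono j0 hj0
      · rw [(hCcase u v).2 hex]
        exact f_nonneg hfeas u v
    have hC_x : ∀ u v : V, C u v ≠ 0 → x u v = 1 := by
      intro u v hC
      by_cases hex : ∃ j0, j0 < b0 ∧ u = g (j0+1) ∧ v = g j0
      · obtain ⟨j0, hj0, hu, hv⟩ := hex
        rw [hu, hv]
        exact (hInv' j0 hj0).1
      · exact absurd ((hCcase u v).2 hex) hC
    -- sums of the correction term
    have hCout : ∀ v : V, (∑ w : V, C v w)
        = ∑ j ∈ Finset.range b0, (if v = g (j+1) then δ else 0) := by
      intro v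
      simp only [hCdef]
      rw [Finset.sum_comm]
      apply Finset.sum_congr rfl
      intro j _
      have : ∀ w : V, (if v = g (j+1) ∧ w = g j then δ else 0)
          = if w = g j then (if v = g (j+1) then δ else 0) else 0 := by
        intro w; split_ifs with h1 h2 h3 <;> tauto
      rw [Finset.sum_congr rfl (fun w _ => this w), Finset.sum_ite_eq' Finset.univ (g j)]
      simp
    have hCin : ∀ v : V, (∑ u : V, C u v)
        = ∑ j ∈ Finset.range b0, (if v = g j then δ else 0) := by
      intro v
      simp only [hCdef]
      rw [Finset.sum_comm]
      apply Finset.sum_congr rfl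
      intro j _
      have : ∀ u : V, (if u = g (j+1) ∧ v = g j then δ else 0)
          = if u = g (j+1) then (if v = g j then δ else 0) else 0 := by
        intro u; split_ifs with h1 h2 h3 <;> tauto
      rw [Finset.sum_congr rfl (fun u _ => this u), Finset.sum_ite_eq' Finset.univ (g (j+1))]
      simp
    have hshift : ∀ v : V, (∑ j ∈ Finset.range b0, (if v = g (j+1) then δ else 0))
        = ∑ j ∈ Finset.range b0, (if v = g j then δ else 0) := by
      intro v
      have h0b : (if v = g b0 then δ else 0) = (if v = g 0 then δ else 0) := by
        rw [hgb0, hg0]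
      have hs1 : ∑ j ∈ Finset.range (b0+1), (if v = g j then δ else 0)
          = (∑ j ∈ Finset.range b0, (if v = g (j+1) then δ else 0))
            + (if v = g 0 then δ else 0) := Finset.sum_range_succ' _ _
      have hs2 : ∑ j ∈ Finset.range (b0+1), (if v = g j then δ else 0)
          = (∑ j ∈ Finset.range b0, (if v = g j then δ else 0))
            + (if v = g b0 then δ else 0) := Finset.sum_range_succ _ _
      rw [h0b] at hs2
      linarith [hs1, hs2]
    -- the new flow
    refine ⟨fun u v => f u v - C u v, ?_, ?_⟩
    · obtain ⟨h1, h2, h3, h4, h5, h6, h7, h8, h9, h10, h11⟩ := hfeas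
      refine ⟨h1, h2, ?_, h4, h5, ?_, ?_, h8, h9, h10, h11⟩ <;> beta_reduce
      · intro u v hadj
        have hfz := h3 u v hadj
        have hCz : C u v = 0 := by
          by_contra hn
          have hx1 := hC_x u v hn
          have hx0 := h1 u v hadj
          omega
        rw [hfz, hCz]; ring
      · intro u v
        constructor
        · have := hC_le u v; linarith
        · have h6uv := (h6 u v).2
          have := hC_nonneg u v
          linarith
      · intro v
        have : (∑ w : V, (f v w - C v w)) - (∑ u : V, (f u v - C u v))
            = ((∑ w : V, f v w) - (∑ u : V, f u v))
              - ((∑ w : V, C v w) - (∑ u : V, C u v)) := by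
          rw [Finset.sum_sub_distrib, Finset.sum_sub_distrib]
          ring
        rw [this, hCout v, hCin v, hshift v]
        rw [sub_self, sub_zero]
        exact h7 v
    · have hC1 : C p s = δ := by
        apply (hCcase p s).1
        exact ⟨0, hb0pos, by rw [hp1], by rw [hg0]⟩
      show f p s - C p s = 0
      rw [hC1, hδdef, hp1, hg0]
      ring
  · -- a directed cycle avoiding s : flow contradiction
    exfalso
    have ha11 : 1 ≤ a1 := by omega
    set W : Finset V := (Finset.Ico a1 b0).image g with hW
    have hsW : s ∉ W := by
      intro hmem
      obtain ⟨j, hj, hgj⟩ := Finset.mem_image.mp hmem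
      rw [Finset.mem_Ico] at hj
      exact hnos j (le_trans ha11 hj.1) hj.2 hgj
    have hin : ∀ v ∈ W, ∃ u ∈ W, x u v = 1 := by
      intro v hv
      obtain ⟨j, hj, hgj⟩ := Finset.mem_image.mp hv
      rw [Finset.mem_Ico] at hj
      refine ⟨g (j+1), ?_, by rw [← hgj]; exact (hInv' j hj.2).1⟩
      by_cases hj1 : j + 1 < b0
      · exact Finset.mem_image.mpr ⟨j+1, Finset.mem_Ico.mpr ⟨by omega, hj1⟩, rfl⟩
      · have : j + 1 = b0 := by omega
        rw [this, ← heq1]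
        exact Finset.mem_image.mpr ⟨a1, Finset.mem_Ico.mpr ⟨le_refl _, by omega⟩, rfl⟩
    obtain ⟨-, hfout⟩ := balance hfeas W hsW hin
    have hga1W : g a1 ∈ W := Finset.mem_image.mpr ⟨a1, Finset.mem_Ico.mpr ⟨le_refl _, by omega⟩, rfl⟩
    have hga1m : g (a1 - 1) ∉ W := by
      intro hmem
      obtain ⟨j, hj, hgj⟩ := Finset.mem_image.mp hmem
      rw [Finset.mem_Ico] at hj
      exact hinj (a1-1) j (by omega) hj.2 hgj.symm
    have hpos : 0 < f (g a1) (g (a1 - 1)) := by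
      have := (hInv' (a1 - 1) (by omega)).2
      have heq' : a1 - 1 + 1 = a1 := by omega
      rwa [heq'] at this
    rw [hfout (g a1) hga1W (g (a1-1)) hga1m] at hpos
    exact lt_irrefl _ hpos

/-- In an optimal solution, no arc enters the source. -/
lemma no_arc_into_s (hfeas : ILPFeasible G ℓ T s x y f)
    (c : V → V → ℝ) (hcpos : ∀ u v : V, G.Adj u v → 0 < c u v)
    (hopt : ∀ (x' y' : V → V → ℕ) (f' : V → V → ℝ),
      ILPFeasible G ℓ T s x' y' f' → ILPobj c y ≤ ILPobj c y') :
    ∀ p : V, x p s ≠ 1 := by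
  intro p hx
  obtain ⟨f', hfeas', hf'⟩ := flow_fix hfeas p hx
  obtain ⟨x2, y2, f2, hfeas2, hlt⟩ := improve_of_arc_into_s hfeas' c hcpos p hx hf'
  exact absurd (hopt x2 y2 f2 hfeas2) (not_le.mpr hlt)

/-- In an optimal solution, the arc set `{(u,v) : x u v = 1}` has no directed cycle. -/
lemma no_dicycle (hfeas : ILPFeasible G ℓ T s x y f)
    (c : V → V → ℝ) (hcpos : ∀ u v : V, G.Adj u v → 0 < c u v)
    (hopt : ∀ (x' y' : V → V → ℕ) (f' : V → V → ℝ),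
      ILPFeasible G ℓ T s x' y' f' → ILPobj c y ≤ ILPobj c y') :
    ∀ v0 : V, ¬ Relation.TransGen (fun a b => x a b = 1) v0 v0 := by
  classical
  intro v0 hcyc
  have hnos := no_arc_into_s hfeas c hcpos hopt
  set D : Set V := {u | Relation.ReflTransGen (fun a b => x a b = 1) v0 u} with hD
  have hv0D : v0 ∈ D := Relation.ReflTransGen.refl
  have hclosed : ∀ v ∈ D, ∀ w, x v w = 1 → w ∈ D :=
    fun v hv w hw => Relation.ReflTransGen.tail hv hw
  have hin : ∀ v ∈ D, ∃ u ∈ D, x u v = 1 := by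
    intro v hv
    rcases Relation.ReflTransGen.cases_tail hv with heq | ⟨u, hu, hstep⟩
    · subst heq
      obtain ⟨u, hu1, hu2⟩ := Relation.TransGen.tail'_iff.mp hcyc
      exact ⟨u, hu1, hu2⟩
    · exact ⟨u, hu, hstep⟩
  have hsD : s ∉ D := by
    intro hsmem
    obtain ⟨u, _, hu⟩ := hin s hsmem
    exact hnos u hu
  set Df : Finset V := Finset.univ.filter (· ∈ D) with hDf
  have hmemDf : ∀ v, v ∈ Df ↔ v ∈ D := by
    intro v; simp [hDf]
  obtain ⟨hT1', -⟩ := balance hfeas Df (fun h => hsD ((hmemDf s).mp h))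
    (fun v hv => by
      obtain ⟨u, hu, hxu⟩ := hin v ((hmemDf v).mp hv)
      exact ⟨u, (hmemDf u).mpr hu, hxu⟩)
  have hT1 : ∀ v, v ∈ D → v ∉ T 1 := fun v hv => hT1' v ((hmemDf v).mpr hv)
  -- structural zeroes
  have hxout : ∀ u v : V, u ∈ D → v ∉ D → x u v = 0 := by
    intro u v hu hv
    have h1 := x_le_one hfeas u v
    by_contra hn
    exact hv (hclosed u hu v (by omega))
  have hyout : ∀ u v : V, u ∈ D → v ∉ D → y u v = 0 := by
    intro u v hu hv
    by_contra hn
    exact hv (hclosed u hu v (x_of_y hfeas (by omega)))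
  have hfout : ∀ u v : V, u ∈ D → v ∉ D → f u v = 0 := by
    intro u v hu hv
    exact f_zero_of_x hfeas (by rw [hxout u v hu hv]; omega)
  have hxin0 : ∀ u v : V, u ∉ D → v ∈ D → x u v = 0 := by
    intro u v hu hv
    obtain ⟨u', hu', hx'⟩ := hin v hv
    have h1 := x_le_one hfeas u v
    by_contra hn
    have h2 : x u v = 1 := by omega
    exact hu (by rw [parent_unique hfeas h2 hx']; exact hu')
  have hfin0 : ∀ u v : V, u ∉ D → v ∈ D → f u v = 0 := by
    intro u v hu hv
    exact f_zero_of_x hfeas (by rw [hxin0 u v hu hv]; omega)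
  -- the improved solution : delete everything leaving D
  have hfeas' : ILPFeasible G ℓ T s (fun u v => if u ∈ D then 0 else x u v)
      (fun u v => if u ∈ D then 0 else y u v) (fun u v => if u ∈ D then 0 else f u v) := by
    obtain ⟨h1, h2, h3, h4, h5, h6, h7, h8, h9, h10, h11⟩ := hfeas
    refine ⟨?_, ?_, ?_, ?_, ?_, ?_, ?_, ?_, ?_, ?_, ?_⟩ <;> beta_reduce
    · intro u v h; split_ifs; · rfl
      exact h1 u v h
    · intro u v h; split_ifs; · rfl
      exact h2 u v h
    · intro u v h; split_ifs; · rfl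
      exact h3 u v h
    · intro u v; split_ifs; · omega
      exact h4 u v
    · intro u v; split_ifs; · simp
      exact h5 u v
    · intro u v; split_ifs; · norm_num
      exact h6 u v
    · intro v
      by_cases hvD : v ∈ D
      · have hout0 : (∑ w : V, if v ∈ D then 0 else f v w) = 0 :=
          Finset.sum_eq_zero fun w _ => if_pos hvD
        have hin0 : (∑ u : V, if u ∈ D then 0 else f u v) = 0 := by
          apply Finset.sum_eq_zero
          intro u _
          split_ifs with h
          · rfl
          · exact hfin0 u v h hvD
        rw [hout0, hin0, if_neg (fun h : v = s => hsD (h ▸ hvD)),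
          if_neg (hT1 v hvD)]
        ring
      · have hout : (∑ w : V, if v ∈ D then 0 else f v w) = ∑ w : V, f v w :=
          Finset.sum_congr rfl fun w _ => if_neg hvD
        have hineq : (∑ u : V, if u ∈ D then 0 else f u v) = ∑ u : V, f u v := by
          apply Finset.sum_congr rfl
          intro u _
          split_ifs with h
          · exact (hfout u v h hvD).symm
          · rfl
        rw [hout, hineq]
        exact h7 v
    · intro v
      calc (∑ u : V, if u ∈ D then 0 else x u v) ≤ ∑ u : V, x u v := by
            apply Finset.sum_le_sum; intro u _; split_ifs <;> omega
        _ ≤ 1 := h8 v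
    · intro v w hadj hvs
      split_ifs with hvD
      · exact Nat.zero_le _
      · calc x v w ≤ ∑ u ∈ Finset.univ.erase w, x u v := h9 v w hadj hvs
          _ = ∑ u ∈ Finset.univ.erase w, (if u ∈ D then 0 else x u v) := by
              apply Finset.sum_congr rfl
              intro u _
              split_ifs with h
              · exact hxout u v h hvD
              · rfl
    · intro v w hadj hvs
      split_ifs with hvD
      · exact Nat.zero_le _
      · calc y v w ≤ ∑ u ∈ Finset.univ.erase w, y u v := h10 v w hadj hvs
          _ = ∑ u ∈ Finset.univ.erase w, (if u ∈ D then 0 else y u v) := by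
              apply Finset.sum_congr rfl
              intro u _
              split_ifs with h
              · exact hyout u v h hvD
              · rfl
    · intro v hv hvs
      have hvD : v ∉ D := fun h => hT1 v h hv
      calc Lvl ℓ T v ≤ ∑ u : V, y u v := h11 v hv hvs
        _ = ∑ u : V, (if u ∈ D then 0 else y u v) := by
            apply Finset.sum_congr rfl
            intro u _
            split_ifs with h
            · exact hyout u v h hvD
            · rfl
  -- strict improvement
  obtain ⟨z, hz, hxz⟩ := hin v0 hv0D
  have hlt : ILPobj c (fun u v => if u ∈ D then 0 else y u v) < ILPobj c y := by
    apply ILPobj_lt_of c y _ ?_ z v0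
    · rw [if_pos hz]
      have hadj := adj_of_x hfeas hxz
      have hy1 : 1 ≤ y z v0 := y_of_x hfeas hxz
      have : (0:ℝ) < (y z v0 : ℝ) := by exact_mod_cast hy1
      simpa using mul_pos (hcpos z v0 hadj) this
    · intro u v
      split_ifs with h
      · rcases Nat.eq_zero_or_pos (y u v) with h0 | h0
        · simp [h0]
        · have hadj := adj_of_x hfeas (x_of_y hfeas h0)
          simpa using mul_nonneg (hcpos u v hadj).le (Nat.cast_nonneg (y u v))
      · exact le_refl _
  exact absurd (hopt _ _ _ hfeas') (not_le.mpr hlt)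

/-- The parent relation is well-founded when there is no directed cycle. -/
lemma wf_parent (hnocyc : ∀ v : V, ¬ Relation.TransGen (fun a b : V => x a b = 1) v v) :
    WellFounded (fun a b : V => x a b = 1) := by
  letI : IsTrans V (Relation.TransGen (fun a b : V => x a b = 1)) :=
    ⟨fun _ _ _ => Relation.TransGen.trans⟩
  letI : IsIrrefl V (Relation.TransGen (fun a b : V => x a b = 1)) := ⟨hnocyc⟩
  exact Subrelation.wf (r := Relation.TransGen (fun a b : V => x a b = 1))
    (fun h => Relation.TransGen.single h)
    (Finite.wellFounded_of_trans_of_irrefl _)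

lemma edgeLvl_adj (hfeas : ILPFeasible G ℓ T s x y f) {i : ℕ} (hi : 1 ≤ i) {u v : V}
    (h : (SimpleGraph.fromEdgeSet (EdgeLvl G y i)).Adj u v) :
    (x u v = 1 ∧ i ≤ y u v) ∨ (x v u = 1 ∧ i ≤ y v u) := by
  rw [SimpleGraph.fromEdgeSet_adj] at h
  obtain ⟨⟨hE, a, b, hab, hy⟩, hne⟩ := h
  rcases Sym2.eq_iff.mp hab with ⟨rfl, rfl⟩ | ⟨rfl, rfl⟩
  · exact Or.inl ⟨x_of_y hfeas (le_trans hi hy), hy⟩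
  · exact Or.inr ⟨x_of_y hfeas (le_trans hi hy), hy⟩

lemma edgeLvl_adj_of (hfeas : ILPFeasible G ℓ T s x y f) {i : ℕ} {p v : V}
    (hx : x p v = 1) (hy : i ≤ y p v) :
    (SimpleGraph.fromEdgeSet (EdgeLvl G y i)).Adj p v := by
  rw [SimpleGraph.fromEdgeSet_adj]
  have hadj := adj_of_x hfeas hx
  exact ⟨⟨(G.mem_edgeSet).mpr hadj, p, v, rfl, hy⟩, hadj.ne⟩

/-- A marked vertex other than `s` has a parent whose arc has level at least `i`. -/
lemma marked_step (hfeas : ILPFeasible G ℓ T s x y f) {i : ℕ}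
    (hi : i ∈ Finset.Icc 1 ℓ) (hT1i : ∀ v ∈ T i, v ∈ T 1)
    {v : V} (hvs : v ≠ s)
    (hm : v ∈ T i ∨ (∃ w, x v w = 1 ∧ i ≤ y v w) ∨ (∃ u, x u v = 1 ∧ i ≤ y u v)) :
    ∃ p, x p v = 1 ∧ i ≤ y p v := by
  have hi1 : 1 ≤ i := (Finset.mem_Icc.mp hi).1
  rcases hm with hT | ⟨w, hxvw, hyvw⟩ | hhead
  · -- terminal case
    have hLvl : i ≤ Lvl ℓ T v := by
      apply Finset.le_sup (f := id) (Finset.mem_filter.mpr ⟨hi, hT⟩)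
    have hsum : i ≤ ∑ u : V, y u v :=
      le_trans hLvl (hfeas.2.2.2.2.2.2.2.2.2.2 v (hT1i v hT) hvs)
    have hne : (∑ u : V, y u v) ≠ 0 := by omega
    obtain ⟨p, _, hp⟩ := Finset.exists_ne_zero_of_sum_ne_zero hne
    have hxp : x p v = 1 := x_of_y hfeas (by omega)
    refine ⟨p, hxp, ?_⟩
    rw [← sum_y_in hfeas hxp]
    exact hsum
  · -- tail case
    have hadj := adj_of_x hfeas hxvw
    have hsum : i ≤ ∑ u ∈ Finset.univ.erase w, y u v :=
      le_trans hyvw (hfeas.2.2.2.2.2.2.2.2.2.1 v w hadj hvs)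
    have hne : (∑ u ∈ Finset.univ.erase w, y u v) ≠ 0 := by omega
    obtain ⟨p, hpmem, hp⟩ := Finset.exists_ne_zero_of_sum_ne_zero hne
    have hxp : x p v = 1 := x_of_y hfeas (by omega)
    refine ⟨p, hxp, ?_⟩
    have : (∑ u ∈ Finset.univ.erase w, y u v) = y p v := by
      apply Finset.sum_eq_single_of_mem p hpmem
      intro b _ hb
      exact y_zero_of_not_parent hfeas hxp hb
    rw [← this]
    exact hsum
  · exact hhead

/-- Every marked vertex reaches `s` in the level-`i` graph. -/
lemma reach_s (hfeas : ILPFeasible G ℓ T s x y f)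
    (hnocyc : ∀ v : V, ¬ Relation.TransGen (fun a b : V => x a b = 1) v v)
    {i : ℕ} (hi : i ∈ Finset.Icc 1 ℓ) (hT1i : ∀ v ∈ T i, v ∈ T 1) :
    ∀ v : V, (v ∈ T i ∨ (∃ w, x v w = 1 ∧ i ≤ y v w) ∨ (∃ u, x u v = 1 ∧ i ≤ y u v)) →
      (SimpleGraph.fromEdgeSet (EdgeLvl G y i)).Reachable v s := by
  have hwf := wf_parent (x := x) hnocyc
  intro v
  induction v using WellFounded.induction hwf with
  | _ v ih =>
    intro hm
    by_cases hvs : v = s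
    · rw [hvs]
    · obtain ⟨p, hxp, hyp⟩ := marked_step hfeas hi hT1i hvs hm
      have hreach := ih p hxp (Or.inr (Or.inl ⟨v, hxp, hyp⟩))
      exact ((edgeLvl_adj_of hfeas hxp hyp).reachable.symm).trans hreach

/-- The level-`i` graph is acyclic. -/
lemma level_acyclic (hfeas : ILPFeasible G ℓ T s x y f)
    (hnocyc : ∀ v : V, ¬ Relation.TransGen (fun a b : V => x a b = 1) v v)
    {i : ℕ} (hi1 : 1 ≤ i) :
    (SimpleGraph.fromEdgeSet (EdgeLvl G y i)).IsAcyclic := by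
  classical
  intro v c hc
  set rnk : V → ℕ := fun v => {u | Relation.TransGen (fun a b : V => x b a = 1) v u}.ncard
    with hrnk
  have hstep : ∀ a m : V, x m a = 1 → rnk m < rnk a := by
    intro a m hxm
    have hsub : {u | Relation.TransGen (fun a b : V => x b a = 1) m u}
        ⊂ {u | Relation.TransGen (fun a b : V => x b a = 1) a u} := by
      constructor
      · intro u hu
        exact Relation.TransGen.head hxm hu
      · intro hcon
        have hma : Relation.TransGen (fun a b : V => x b a = 1) a m :=
          Relation.TransGen.single hxm
        have hmm : Relation.TransGen (fun a b : V => x b a = 1) m m := by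
          have := hcon hma
          exact this
        exact hnocyc m (Relation.transGen_swap.mp hmm)
    exact Set.ncard_lt_ncard hsub (Set.toFinite _)
  -- the vertex of maximal rank on the cycle
  obtain ⟨m, hmS, hmax⟩ := Finset.exists_max_image c.support.toFinset rnk
    ⟨v, List.mem_toFinset.mpr (SimpleGraph.Walk.start_mem_support c)⟩
  have hmem : m ∈ c.support := List.mem_toFinset.mp hmS
  set cr := c.rotate m hmem with hcr
  have hcrc : cr.IsCycle := hc.rotate (u := m) hmem
  have hmemcr : ∀ w, w ∈ cr.support → w ∈ c.support := by
    intro w hw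
    rw [SimpleGraph.Walk.support_eq_cons] at hw
    rcases List.mem_cons.mp hw with rfl | hw
    · exact hmem
    · have hperm := SimpleGraph.Walk.support_rotate c m hmem
      have : w ∈ c.support.tail := hperm.mem_iff.mp hw
      rw [SimpleGraph.Walk.support_eq_cons c]
      exact List.mem_cons.mpr (Or.inr this)
  obtain ⟨u1, hadj1, q, hq⟩ := SimpleGraph.Walk.not_nil_iff.mp hcrc.not_nil
  have hqcyc := hcrc
  rw [hq, SimpleGraph.Walk.cons_isCycle_iff] at hqcyc
  obtain ⟨hqpath, hnotmem⟩ := hqcyc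
  -- the last edge of the cycle
  have hlen : 3 ≤ cr.length := hcrc.three_le_length
  have hqlen : 2 ≤ q.length := by
    have : cr.length = q.length + 1 := by rw [hq]; simp
    omega
  have hqrevnil : ¬ q.reverse.Nil := by
    rw [SimpleGraph.Walk.not_nil_iff_lt_length, SimpleGraph.Walk.length_reverse]
    omega
  obtain ⟨z, hadjz, r, hr⟩ := SimpleGraph.Walk.not_nil_iff.mp hqrevnil
  have hzedge : s(m, z) ∈ q.edges := by
    have : s(m, z) ∈ q.reverse.edges := by
      rw [hr, SimpleGraph.Walk.edges_cons]
      exact List.mem_cons_self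
    rwa [SimpleGraph.Walk.edges_reverse, List.mem_reverse] at this
  have hne1z : u1 ≠ z := by
    rintro rfl
    exact hnotmem hzedge
  -- memberships
  have hu1mem : u1 ∈ c.support := by
    apply hmemcr
    rw [hq, SimpleGraph.Walk.support_cons]
    exact List.mem_cons.mpr (Or.inr (SimpleGraph.Walk.start_mem_support q))
  have hzmem : z ∈ c.support := by
    apply hmemcr
    rw [hq, SimpleGraph.Walk.support_cons]
    apply List.mem_cons.mpr ∘ Or.inr
    have : z ∈ q.reverse.support := by
      rw [hr, SimpleGraph.Walk.support_cons]
      exact List.mem_cons.mpr (Or.inr (SimpleGraph.Walk.start_mem_support r))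
    rwa [SimpleGraph.Walk.support_reverse, List.mem_reverse] at this
  -- orientations
  have hx1 : x u1 m = 1 := by
    rcases edgeLvl_adj hfeas hi1 hadj1 with ⟨hxa, _⟩ | ⟨hxa, _⟩
    · have := hstep u1 m hxa
      have := hmax u1 (List.mem_toFinset.mpr hu1mem)
      omega
    · exact hxa
  have hxz : x z m = 1 := by
    rcases edgeLvl_adj hfeas hi1 hadjz with ⟨hxa, _⟩ | ⟨hxa, _⟩
    · have := hstep z m hxa
      have := hmax z (List.mem_toFinset.mpr hzmem)
      omega
    · exact hxa
  exact hne1z (parent_unique hfeas hx1 hxz)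

end MLSTProof

/-- In every optimal solution of the flow-based ILP, for each level `i` the edge set
`E_i = {uv ∈ E : y_{uv} ≥ i or y_{vu} ≥ i}` forms a connected acyclic subgraph of `G`
containing all terminals of `T i` (a Steiner tree for `T i`), and the edge sets are
nested: `E_ℓ ⊆ … ⊆ E_1`. -/
theorem stmt_18 {V : Type} [Fintype V] [DecidableEq V] (G : SimpleGraph V)
    (hconn : G.Connected)
    (c : V → V → ℝ) (hcsymm : ∀ u v : V, c u v = c v u)
    (hcpos : ∀ u v : V, G.Adj u v → 0 < c u v)
    (ℓ : ℕ) (hℓ : 1 ≤ ℓ) (T : ℕ → Finset V)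
    (hTne : ∀ i ∈ Finset.Icc 1 ℓ, (T i).Nonempty)
    (hnest : ∀ i ∈ Finset.Icc 1 ℓ, ∀ j ∈ Finset.Icc 1 ℓ, i ≤ j → T j ⊆ T i)
    (s : V) (hs : s ∈ T ℓ)
    (x y : V → V → ℕ) (f : V → V → ℝ)
    (hfeas : ILPFeasible G ℓ T s x y f)
    (hopt : ∀ (x' y' : V → V → ℕ) (f' : V → V → ℝ),
      ILPFeasible G ℓ T s x' y' f' → ILPobj c y ≤ ILPobj c y') :
    (∀ i ∈ Finset.Icc 1 ℓ,
      (SimpleGraph.fromEdgeSet (EdgeLvl G y i)).IsAcyclic ∧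
      SpansConn (EdgeLvl G y i) (↑(T i) : Set V)) ∧
    (∀ i ∈ Finset.Icc 1 ℓ, ∀ j ∈ Finset.Icc 1 ℓ, i ≤ j → EdgeLvl G y j ⊆ EdgeLvl G y i) := by
  have hnocyc := MLSTProof.no_dicycle hfeas c hcpos hopt
  constructor
  · intro i hi
    have hi1 : 1 ≤ i := (Finset.mem_Icc.mp hi).1
    have hT1i : ∀ v ∈ T i, v ∈ T 1 := by
      intro v hv
      exact hnest 1 (Finset.mem_Icc.mpr ⟨le_refl 1, hℓ⟩) i hi hi1 hv
    refine ⟨MLSTProof.level_acyclic hfeas hnocyc hi1, ?_⟩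
    intro u hu w hw
    have hmark : ∀ z : V, z ∈ (↑(T i) : Set V) ∪ edgeSupport (EdgeLvl G y i) →
        (z ∈ T i ∨ (∃ w, x z w = 1 ∧ i ≤ y z w) ∨ (∃ u, x u z = 1 ∧ i ≤ y u z)) := by
      intro z hz
      rcases hz with hz | ⟨e, ⟨hE, a, b, rfl, hyab⟩, hze⟩
      · exact Or.inl hz
      · rcases Sym2.mem_iff.mp hze with rfl | rfl
        · exact Or.inr (Or.inl ⟨b, MLSTProof.x_of_y hfeas (le_trans hi1 hyab), hyab⟩)
        · exact Or.inr (Or.inr ⟨a, MLSTProof.x_of_y hfeas (le_trans hi1 hyab), hyab⟩)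
    have h1 := MLSTProof.reach_s hfeas hnocyc hi hT1i u (hmark u hu)
    have h2 := MLSTProof.reach_s hfeas hnocyc hi hT1i w (hmark w hw)
    exact h1.trans h2.symm
  · intro i hi j hj hij e he
    obtain ⟨hE, a, b, hab, hy⟩ := he
    exact ⟨hE, a, b, hab, le_trans hij hy⟩
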